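/- Let D = diag(d₁,d₂,d₃) be a real diagonal 3×3 matrix, let U, V ∈ SO(3), let a ∈ ℝ³ with ‖a‖ = 1, and let θ ∈ ℝ. Then tr((U exp(θ â) Vᵀ)ᵀ (U D Vᵀ)) = (d₁+d₂+d₃) − (1−cos θ)·[(d₂+d₃)a₁² + (d₃+d₁)a₂² + (d₁+d₂)a₃²], where exp denotes the matrix exponential. -/

import Mathlib

open MeasureTheory Matrix

noncomputable section

/-- The space of real `3 × 3` matrices. -/
abbrev M3 := Matrix (Fin 3) (Fin 3) ℝ

instance : MeasurableSpace M3 := (inferInstance : MeasurableSpace (Fin 3 → Fin 3 → ℝ))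

/-- The special orthogonal group `SO(3)`: real `3 × 3` matrices `R` with
`Rᵀ R = 1` and `det R = 1`. -/
def SO3 : Set M3 := {R | Rᵀ * R = 1 ∧ R.det = 1}

/-- The hat map: `hat x` is the skew-symmetric `3 × 3` matrix with `(hat x) y = x × y`. -/
def hat (x : Fin 3 → ℝ) : M3 :=
  !![0, -x 2, x 1; x 2, 0, -x 0; -x 1, x 0, 0]

open scoped Nat

lemma hat_cube {a : Fin 3 → ℝ} (ha : a ⬝ᵥ a = 1) : hat a ^ 3 = -hat a := by
  have h : a 0 * a 0 + a 1 * a 1 + a 2 * a 2 = 1 := by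
    simpa [dotProduct, Fin.sum_univ_three] using ha
  rw [pow_succ, pow_two, hat, Matrix.mul_fin_three, Matrix.mul_fin_three]
  ext i j
  fin_cases i <;> fin_cases j <;>
    simp <;>
    first
      | ring1
      | linear_combination a 0 * h
      | linear_combination a 1 * h
      | linear_combination a 2 * h
      | linear_combination (-a 0) * h
      | linear_combination (-a 1) * h
      | linear_combination (-a 2) * h

lemma hat_pow_odd {a : Fin 3 → ℝ} (ha : a ⬝ᵥ a = 1) (n : ℕ) :
    hat a ^ (2 * n + 1) = ((-1 : ℝ)) ^ n • hat a := by
  induction n with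
  | zero => simp
  | succ n ih =>
      have h : 2 * (n + 1) + 1 = (2 * n + 1) + 2 := by ring
      rw [h, pow_add, ih, smul_mul_assoc,
        show hat a * hat a ^ 2 = hat a ^ 3 from (pow_succ' (hat a) 2).symm, hat_cube ha,
        smul_neg, ← neg_smul]
      congr 1
      ring

lemma hat_pow_even {a : Fin 3 → ℝ} (ha : a ⬝ᵥ a = 1) (n : ℕ) :
    hat a ^ (2 * n + 2) = ((-1 : ℝ)) ^ n • (hat a * hat a) := by
  have h : 2 * n + 2 = (2 * n + 1) + 1 := by ring
  rw [h, pow_succ, hat_pow_odd ha, smul_mul_assoc]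

lemma rodrigues {a : Fin 3 → ℝ} (ha : a ⬝ᵥ a = 1) (θ : ℝ) :
    NormedSpace.exp (θ • hat a) =
      1 + Real.sin θ • hat a + (1 - Real.cos θ) • (hat a * hat a) := by
  rw [NormedSpace.exp_eq_tsum ℝ]
  refine HasSum.tsum_eq ?_
  have hodd : HasSum (fun n : ℕ => ((2 * n + 1)! : ℝ)⁻¹ • (θ • hat a) ^ (2 * n + 1))
      (Real.sin θ • hat a) := by
    have h := (Real.hasSum_sin θ).smul_const (hat a)
    convert h using 2 with n
    rw [smul_pow, hat_pow_odd ha, smul_smul, smul_smul]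
    congr 1
    rw [div_eq_mul_inv]
    ring
  have h1 : HasSum (fun n : ℕ => (-1 : ℝ) ^ (n + 1) * θ ^ (2 * (n + 1)) / (2 * (n + 1))!)
      (Real.cos θ - 1) :=
    (hasSum_nat_add_iff (f := fun n : ℕ => (-1 : ℝ) ^ n * θ ^ (2 * n) / (2 * n)!)
      (g := Real.cos θ - 1) 1).mpr (by simpa using Real.hasSum_cos θ)
  have hcos : HasSum (fun n : ℕ => (-1 : ℝ) ^ n * θ ^ (2 * n + 2) / (2 * n + 2)!)
      (1 - Real.cos θ) := by
    have h2 := h1.neg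
    rw [neg_sub] at h2
    convert h2 using 1
    · rfl
    funext n
    have hn : 2 * (n + 1) = 2 * n + 2 := by ring
    rw [hn]
    ring
  have heven : HasSum (fun n : ℕ => ((2 * n)! : ℝ)⁻¹ • (θ • hat a) ^ (2 * n))
      (1 + (1 - Real.cos θ) • (hat a * hat a)) := by
    have h3 := hcos.smul_const (hat a * hat a)
    have h4 : HasSum (fun n : ℕ => ((2 * (n + 1))! : ℝ)⁻¹ • (θ • hat a) ^ (2 * (n + 1)))
        ((1 - Real.cos θ) • (hat a * hat a)) := by
      convert h3 using 2 with n
      have hn : 2 * (n + 1) = 2 * n + 2 := by ring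
      rw [hn, smul_pow, hat_pow_even ha, smul_smul, smul_smul]
      congr 1
      rw [div_eq_mul_inv]
      ring
    have h5 := (hasSum_nat_add_iff
      (f := fun n : ℕ => ((2 * n)! : ℝ)⁻¹ • (θ • hat a) ^ (2 * n)) 1).mp h4
    have hs : ∑ i ∈ Finset.range 1, ((2 * i)! : ℝ)⁻¹ • (θ • hat a) ^ (2 * i) = 1 := by
      simp
    rw [hs] at h5
    simpa [add_comm] using h5
  have key : HasSum (fun n : ℕ => ((n)! : ℝ)⁻¹ • (θ • hat a) ^ n)
      ((1 + (1 - Real.cos θ) • (hat a * hat a)) + Real.sin θ • hat a) :=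
    HasSum.even_add_odd heven hodd
  convert key using 1
  · rfl
  abel

/-- For `U, V ∈ SO(3)`, `D = diag (d₁,d₂,d₃)`, a unit vector `a` and an angle `θ`:
`tr((U exp(θ â) Vᵀ)ᵀ (U D Vᵀ)) =
  (d₁+d₂+d₃) − (1−cos θ)((d₂+d₃)a₁² + (d₃+d₁)a₂² + (d₁+d₂)a₃²)`. -/
theorem trace_rotated_mean (d : Fin 3 → ℝ) (U V : M3) (hU : U ∈ SO3) (hV : V ∈ SO3)
    (a : Fin 3 → ℝ) (ha : a ⬝ᵥ a = 1) (θ : ℝ) :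
    ((U * NormedSpace.exp (θ • hat a) * Vᵀ)ᵀ * (U * Matrix.diagonal d * Vᵀ)).trace
      = (d 0 + d 1 + d 2) - (1 - Real.cos θ) *
          ((d 1 + d 2) * a 0 ^ 2 + (d 2 + d 0) * a 1 ^ 2 + (d 0 + d 1) * a 2 ^ 2) := by
  have hUU : Uᵀ * U = 1 := hU.1
  have hVV : Vᵀ * V = 1 := hV.1
  have h : a 0 * a 0 + a 1 * a 1 + a 2 * a 2 = 1 := by
    simpa [dotProduct, Fin.sum_univ_three] using ha
  have key : ∀ E : M3, ((U * E * Vᵀ)ᵀ * (U * Matrix.diagonal d * Vᵀ)).trace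
      = (Eᵀ * Matrix.diagonal d).trace := by
    intro E
    calc ((U * E * Vᵀ)ᵀ * (U * Matrix.diagonal d * Vᵀ)).trace
        = (V * (Eᵀ * ((Uᵀ * U) * (Matrix.diagonal d * Vᵀ)))).trace := by
          simp only [Matrix.transpose_mul, Matrix.transpose_transpose, Matrix.mul_assoc]
      _ = ((Eᵀ * (Matrix.diagonal d * Vᵀ)) * V).trace := by
          rw [hUU, Matrix.one_mul, Matrix.trace_mul_comm]
      _ = (Eᵀ * (Matrix.diagonal d * (Vᵀ * V))).trace := by
          simp only [Matrix.mul_assoc]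
      _ = (Eᵀ * Matrix.diagonal d).trace := by rw [hVV, Matrix.mul_one]
  rw [rodrigues ha θ, key]
  simp only [Matrix.transpose_add, Matrix.transpose_smul, Matrix.transpose_one,
    Matrix.transpose_mul, Matrix.trace, Matrix.diag, Matrix.mul_apply, Matrix.add_apply,
    Matrix.smul_apply, Matrix.one_apply, Matrix.transpose_apply, Matrix.diagonal,
    Fin.sum_univ_three, hat, smul_eq_mul]
  norm_num [Matrix.of_apply, Fin.ext_iff]
  simp only [Matrix.cons_val_zero, Matrix.cons_val_one, Matrix.cons_val_two, Matrix.cons_val_succ, Matrix.head_cons, Matrix.tail_cons, Matrix.vecHead, Fin.isValue]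
  ring1
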